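/- For any real polynomial s of degree at most k and real numbers 0 < μ < L, the maximum over η in [μ, L] of |s(η)·η + 1| is at least ((√κ - 1)/(√κ + 1))^(k+1), where κ = L/μ. -/

import Mathlib

open Real Set

lemma natDegree_T_le' : ∀ n : ℕ, (Polynomial.Chebyshev.T ℝ (n : ℤ)).natDegree ≤ n ∧
    (Polynomial.Chebyshev.T ℝ ((n : ℤ) + 1)).natDegree ≤ n + 1 := by
  intro n
  induction n with
  | zero => constructor <;> simp [Polynomial.Chebyshev.T_zero, Polynomial.Chebyshev.T_one]
  | succ m ih =>
    obtain ⟨h1, h2⟩ := ih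
    have key : (Polynomial.Chebyshev.T ℝ ((m : ℤ) + 2)).natDegree ≤ m + 2 := by
      rw [Polynomial.Chebyshev.T_add_two]
      refine (Polynomial.natDegree_sub_le _ _).trans ?_
      simp only [max_le_iff]
      constructor
      · refine (Polynomial.natDegree_mul_le).trans ?_
        have : (2 * Polynomial.X : Polynomial ℝ).natDegree ≤ 1 := by
          refine (Polynomial.natDegree_mul_le).trans ?_; simp
        omega
      · omega
    refine ⟨by exact_mod_cast h2, ?_⟩
    have e2 : ((m + 1 : ℕ) : ℤ) + 1 = (m : ℤ) + 2 := by push_cast; ring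
    rw [e2]
    exact key

lemma natDegree_T_le (n : ℕ) : (Polynomial.Chebyshev.T ℝ (n : ℤ)).natDegree ≤ n :=
  (natDegree_T_le' n).1

lemma T_real_cosh (n : ℤ) (t : ℝ) :
    (Polynomial.Chebyshev.T ℝ n).eval (Real.cosh t) = Real.cosh (n * t) := by
  have h1 : ((Polynomial.eval (Real.cosh t) (Polynomial.Chebyshev.T ℝ n) : ℝ) : ℂ) =
      Polynomial.eval ((Real.cosh t : ℝ) : ℂ) (Polynomial.Chebyshev.T ℂ n) :=
    Polynomial.Chebyshev.complex_ofReal_eval_T _ n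
  have h2 : ((Real.cosh t : ℝ) : ℂ) = Complex.cos (t * Complex.I) := by
    rw [Complex.cos_mul_I, Complex.ofReal_cosh]
  rw [h2, Polynomial.Chebyshev.T_complex_cos] at h1
  have h3 : ((n : ℂ) * ((t : ℂ) * Complex.I)) = ((n * t : ℝ) : ℂ) * Complex.I := by
    push_cast; ring
  rw [h3, Complex.cos_mul_I, ← Complex.ofReal_cosh] at h1
  exact_mod_cast h1

set_option maxHeartbeats 1600000 in
theorem stmt_0 (k : ℕ) (s : Polynomial ℝ) (hs : s.natDegree ≤ k)
    (μ L : ℝ) (hμ : 0 < μ) (hμL : μ < L) :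
    ∃ η ∈ Set.Icc μ L,
      |s.eval η * η + 1| ≥ ((Real.sqrt (L / μ) - 1) / (Real.sqrt (L / μ) + 1)) ^ (k + 1) := by
  by_contra hcon
  push_neg at hcon
  set n := k + 1 with hn
  set a := Real.sqrt (L / μ) with ha
  have hκ : 1 < L / μ := (one_lt_div hμ).2 hμL
  have ha1 : 1 < a := by
    rw [ha, show (1 : ℝ) = Real.sqrt 1 by simp]
    exact Real.sqrt_lt_sqrt (by norm_num) hκ
  have haa : a * a = L / μ := Real.mul_self_sqrt (by linarith)
  set ρ := (a - 1) / (a + 1) with hρ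
  have hρ0 : 0 < ρ := div_pos (by linarith) (by linarith)
  have hρ1 : ρ < 1 := (div_lt_one (by linarith)).2 (by linarith)
  have hLμ0 : (0 : ℝ) < L - μ := by linarith
  set c := (L + μ) / (L - μ) with hc
  have haa' : a * a * μ = L := by
    rw [haa]; field_simp
  have hsum : ρ⁻¹ + ρ = 2 * c := by
    rw [hρ, hc]
    have h1 : a - 1 ≠ 0 := by intro h; nlinarith
    have h2 : a + 1 ≠ 0 := by intro h; nlinarith
    have h3 : L - μ ≠ 0 := hLμ0.ne'
    rw [inv_div]
    field_simp
    ring_nf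
    linear_combination (-4 : ℝ) * haa'
  set t := Real.log ρ⁻¹ with ht
  have hexp : Real.exp t = ρ⁻¹ := Real.exp_log (by positivity)
  have hexp' : Real.exp (-t) = ρ := by rw [Real.exp_neg, hexp, inv_inv]
  have hcosh : Real.cosh t = c := by rw [Real.cosh_eq, hexp, hexp']; linarith
  set Tn := Polynomial.Chebyshev.T ℝ (n : ℤ) with hTn
  have hTc : Tn.eval c = (ρ⁻¹ ^ n + ρ ^ n) / 2 := by
    rw [← hcosh, hTn, T_real_cosh, Real.cosh_eq]
    have h1 : (((n : ℤ) : ℝ)) * t = (n : ℝ) * t := by push_cast; ring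
    rw [h1, Real.exp_nat_mul, hexp]
    have h2 : -((n : ℝ) * t) = (n : ℝ) * (-t) := by ring
    rw [h2, Real.exp_nat_mul, hexp']
  have hTcpos : 0 < Tn.eval c := by rw [hTc]; positivity
  have hmain : ρ ^ n ≤ (Tn.eval c)⁻¹ := by
    rw [← one_div, le_div_iff₀ hTcpos, hTc]
    have h1 : ρ ^ n * ρ⁻¹ ^ n = 1 := by
      rw [← mul_pow, mul_inv_cancel₀ (ne_of_gt hρ0), one_pow]
    have h2 : ρ ^ n ≤ 1 := pow_le_one₀ (le_of_lt hρ0) (le_of_lt hρ1)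
    nlinarith [pow_pos hρ0 n]
  -- polynomials
  set P := s * Polynomial.X + 1 with hP
  have hPeval : ∀ η : ℝ, P.eval η = s.eval η * η + 1 := by intro η; simp [hP]
  have hPdeg : P.natDegree ≤ n := by
    refine (Polynomial.natDegree_add_le _ _).trans ?_
    simp only [Polynomial.natDegree_one, max_le_iff]
    refine ⟨(Polynomial.natDegree_mul_le).trans ?_, by omega⟩
    simp only [Polynomial.natDegree_X]
    omega
  set ℓp := Polynomial.C c - Polynomial.C (2 / (L - μ)) * Polynomial.X with hℓ
  have hℓeval : ∀ η : ℝ, ℓp.eval η = (L + μ - 2 * η) / (L - μ) := by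
    intro η
    simp only [hℓ, Polynomial.eval_sub, Polynomial.eval_mul, Polynomial.eval_C,
      Polynomial.eval_X, hc]
    field_simp
  have hℓdeg : ℓp.natDegree ≤ 1 := by
    refine (Polynomial.natDegree_sub_le _ _).trans ?_
    simp only [Polynomial.natDegree_C, max_le_iff]
    refine ⟨by omega, (Polynomial.natDegree_mul_le).trans ?_⟩
    simp
  set Q := P - Polynomial.C (Tn.eval c)⁻¹ * (Tn.comp ℓp) with hQ
  have hQdeg : Q.natDegree ≤ n := by
    refine (Polynomial.natDegree_sub_le _ _).trans ?_
    simp only [max_le_iff]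
    refine ⟨hPdeg, (Polynomial.natDegree_mul_le).trans ?_⟩
    simp only [Polynomial.natDegree_C, zero_add]
    refine (Polynomial.natDegree_comp_le).trans ?_
    have := natDegree_T_le n
    have := hℓdeg
    calc Tn.natDegree * ℓp.natDegree ≤ n * 1 := by
          exact Nat.mul_le_mul (natDegree_T_le n) hℓdeg
      _ = n := by omega
  have hQeval : ∀ η : ℝ, Q.eval η =
      P.eval η - (Tn.eval c)⁻¹ * Tn.eval ((L + μ - 2 * η) / (L - μ)) := by
    intro η
    simp only [hQ, Polynomial.eval_sub, Polynomial.eval_mul, Polynomial.eval_C,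
      Polynomial.eval_comp, hℓeval η]
  -- nodes
  set θf : ℕ → ℝ := fun j => j * π / n with hθf
  set e : ℕ → ℝ := fun j => ((L + μ) - (L - μ) * Real.cos (θf j)) / 2 with he
  have hn0 : (0 : ℝ) < (n : ℝ) := by positivity
  have hθmem : ∀ j, j ≤ n → θf j ∈ Set.Icc 0 π := by
    intro j hj
    constructor
    · have := Real.pi_pos; positivity
    · rw [hθf]
      rw [div_le_iff₀ hn0]
      have hj' : (j : ℝ) ≤ n := by exact_mod_cast hj
      nlinarith [Real.pi_pos]
  have hemem : ∀ j, e j ∈ Set.Icc μ L := by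
    intro j
    have h1 := Real.neg_one_le_cos (θf j)
    have h2 := Real.cos_le_one (θf j)
    constructor
    · simp only [he]; nlinarith
    · simp only [he]; nlinarith
  have hemono : ∀ i j, i < j → j ≤ n → e i < e j := by
    intro i j hij hj
    have hci := hθmem i (by omega)
    have hcj := hθmem j hj
    have hθlt : θf i < θf j := by
      simp only [hθf]
      have hij' : (i : ℝ) < j := by exact_mod_cast hij
      have := Real.pi_pos
      rw [div_lt_div_iff₀ hn0 hn0]
      nlinarith [mul_pos (mul_pos (sub_pos.mpr hij') this) hn0]
    have hcos := Real.strictAntiOn_cos hci hcj hθlt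
    simp only [he]
    nlinarith
  have hemono' : ∀ i j, i ≤ j → j ≤ n → e i ≤ e j := by
    intro i j hij hj
    rcases eq_or_lt_of_le hij with rfl | hlt
    · exact le_refl _
    · exact le_of_lt (hemono i j hlt hj)
  -- Q at nodes
  have hQe : ∀ j, j ≤ n → Q.eval (e j) = P.eval (e j) - (Tn.eval c)⁻¹ * (-1) ^ j := by
    intro j hj
    rw [hQeval]
    have harg : (L + μ - 2 * e j) / (L - μ) = Real.cos (θf j) := by
      simp only [he]; field_simp; ring
    rw [harg, hTn, Polynomial.Chebyshev.T_real_cos]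
    have h1 : (((n : ℤ) : ℝ)) * θf j = j * π := by
      simp only [hθf]; push_cast; field_simp
    rw [h1]
    congr 2
    simpa using Real.cos_nat_mul_pi_sub 0 j
  have habs : ∀ j, |P.eval (e j)| < (Tn.eval c)⁻¹ := by
    intro j
    have h1 := hcon (e j) (hemem j)
    rw [← hPeval] at h1
    exact lt_of_lt_of_le h1 hmain
  have hsignE : ∀ j, j ≤ n → Even j → Q.eval (e j) < 0 := by
    intro j hj hev
    rw [hQe j hj, hev.neg_one_pow]
    have := abs_lt.1 (habs j)
    linarith
  have hsignO : ∀ j, j ≤ n → Odd j → 0 < Q.eval (e j) := by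
    intro j hj hod
    rw [hQe j hj, hod.neg_one_pow]
    have := abs_lt.1 (habs j)
    linarith
  -- roots via IVT
  have hQcont : Continuous fun x : ℝ => Q.eval x := Q.continuous_aeval
  have hroot : ∀ j : Fin n, ∃ x ∈ Set.Ioo (e j) (e ((j : ℕ) + 1)), Q.eval x = 0 := by
    intro j
    have hj1 : (j : ℕ) + 1 ≤ n := j.2
    have hlt : e j < e ((j : ℕ) + 1) := hemono j ((j : ℕ) + 1) (by omega) hj1
    rcases Nat.even_or_odd (j : ℕ) with hev | hod
    · have h1 := hsignE j (by omega) hev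
      have h2 := hsignO ((j : ℕ) + 1) hj1 (Even.add_one hev)
      have hsub := intermediate_value_Ioo (le_of_lt hlt) hQcont.continuousOn
      have h0 : (0 : ℝ) ∈ Set.Ioo (Q.eval (e j)) (Q.eval (e ((j : ℕ) + 1))) := ⟨h1, h2⟩
      obtain ⟨x, hx, hx0⟩ := hsub h0
      exact ⟨x, hx, hx0⟩
    · have h1 := hsignO j (by omega) hod
      have h2 := hsignE ((j : ℕ) + 1) hj1 (Odd.add_one hod)
      have hsub := intermediate_value_Ioo' (le_of_lt hlt) hQcont.continuousOn
      have h0 : (0 : ℝ) ∈ Set.Ioo (Q.eval (e ((j : ℕ) + 1))) (Q.eval (e j)) := ⟨h2, h1⟩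
      obtain ⟨x, hx, hx0⟩ := hsub h0
      exact ⟨x, hx, hx0⟩
  choose ξ hξmem hξroot using hroot
  have hξpos : ∀ j, 0 < ξ j := by
    intro j
    have := (hξmem j).1
    have := (hemem (j : ℕ)).1
    linarith
  have hξmono : ∀ i j : Fin n, i < j → ξ i < ξ j := by
    intro i j hij
    have h1 : ξ i < e ((i : ℕ) + 1) := (hξmem i).2
    have h2 : e ((i : ℕ) + 1) ≤ e (j : ℕ) := hemono' _ _ (by exact_mod_cast hij) (by omega)
    have h3 : e (j : ℕ) < ξ j := (hξmem j).1
    linarith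
  set f : Option (Fin n) → ℝ := fun o => o.elim 0 ξ with hf
  have hfinj : Function.Injective f := by
    intro o1 o2 h
    match o1, o2 with
    | none, none => rfl
    | none, some j => exact absurd h (hξpos j).ne
    | some i, none => exact absurd h (hξpos i).ne'
    | some i, some j =>
      rcases lt_trichotomy i j with hlt | heq | hgt
      · exact absurd h (hξmono i j hlt).ne
      · rw [heq]
      · exact absurd h.symm (hξmono j i hgt).ne
  have hQ0 : Q.eval 0 = 0 := by
    rw [hQeval 0]
    have h1 : (L + μ - 2 * 0) / (L - μ) = c := by rw [hc]; ring_nf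
    rw [h1, hPeval, inv_mul_cancel₀ (ne_of_gt hTcpos)]
    ring
  have hzero : Q = 0 := by
    refine Polynomial.eq_zero_of_natDegree_lt_card_of_eval_eq_zero Q hfinj ?_ ?_
    · intro o
      match o with
      | none => exact hQ0
      | some j => exact hξroot j
    · simp only [Fintype.card_option, Fintype.card_fin]
      omega
  have hfinal := hsignE 0 (by omega) Even.zero
  rw [hzero] at hfinal
  simp only [Polynomial.eval_zero] at hfinal
  exact lt_irrefl _ hfinal
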